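/- Randomization lower bound for S_p when p ≥ 2: let λ be a frequency, p ≥ 2, σ > 0 and C > 0 such that Σ|a_n|e^{-λ_n σ} ≤ C‖D‖_p for all Dirichlet polynomials D = Σ a_n e^{-λ_n s}. Then there is a constant C_p (from the Kahane–Khinchin inequality) such that for all finite coefficient sequences (a_n), Σ_{n=1}^N |a_n| e^{-λ_n σ} ≤ C·C_p (Σ_{n=1}^N |a_n|²)^{1/2}. -/

import Mathlib

open Finset Filter MeasureTheory intervalIntegral



lemma meanExpBound (ν : ℝ) (hν : ν ≠ 0) (T : ℝ) :
    ‖∫ t in (-T)..T, Complex.exp ((ν : ℂ) * (t : ℂ) * Complex.I)‖ ≤ 2 / |ν| := by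
  have hc : (ν : ℂ) * Complex.I ≠ 0 :=
    mul_ne_zero (by exact_mod_cast hν) Complex.I_ne_zero
  have hre : ∀ t : ℝ, (ν : ℂ) * (t : ℂ) * Complex.I = ((ν : ℂ) * Complex.I) * t := by
    intro t; ring
  simp_rw [hre]
  rw [integral_exp_mul_complex hc]
  have h1 : ∀ s : ℝ, ‖Complex.exp ((ν : ℂ) * Complex.I * s)‖ = 1 := by
    intro s
    have : (ν : ℂ) * Complex.I * s = ((ν * s : ℝ) : ℂ) * Complex.I := by push_cast; ring
    rw [this, Complex.norm_exp_ofReal_mul_I]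
  have hnorm : ‖(ν : ℂ) * Complex.I‖ = |ν| := by
    simp
  calc ‖(Complex.exp ((ν:ℂ) * Complex.I * T) - Complex.exp ((ν:ℂ) * Complex.I * (-T:ℝ))) / ((ν:ℂ)*Complex.I)‖
      = ‖Complex.exp ((ν:ℂ) * Complex.I * T) - Complex.exp ((ν:ℂ) * Complex.I * (-T:ℝ))‖ / |ν| := by
        rw [norm_div, hnorm]
    _ ≤ (‖Complex.exp ((ν:ℂ) * Complex.I * T)‖ + ‖Complex.exp ((ν:ℂ) * Complex.I * (-T:ℝ))‖) / |ν| := by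
        gcongr; exact norm_sub_le _ _
    _ = 2 / |ν| := by rw [h1, h1]; norm_num





lemma twoT_tendsto : Tendsto (fun T : ℝ => 2 * T) atTop atTop :=
  tendsto_id.const_mul_atTop two_pos

lemma meanCross (w : ℂ) (ν : ℝ) :
    Tendsto (fun T : ℝ => (1/(2*T)) * (w * ∫ t in (-T)..T, Complex.exp ((ν:ℂ)*(t:ℂ)*Complex.I)).re)
      atTop (nhds (if ν = 0 then w.re else 0)) := by
  by_cases hν : ν = 0
  · rw [if_pos hν]
    have hev : ∀ᶠ T in (atTop : Filter ℝ),
        (1/(2*T)) * (w * ∫ t in (-T)..T, Complex.exp ((ν:ℂ)*(t:ℂ)*Complex.I)).re = w.re := by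
      filter_upwards [eventually_gt_atTop (0:ℝ)] with T hT
      have he : ∀ t : ℝ, Complex.exp ((ν:ℂ)*(t:ℂ)*Complex.I) = 1 := by
        intro t; rw [hν]; simp
      simp_rw [he]
      rw [intervalIntegral.integral_const]
      have h2T : (2*T) ≠ 0 := by positivity
      have hs : (T - (-T)) • (1:ℂ) = ((2*T : ℝ) : ℂ) := by
        rw [Complex.real_smul, mul_one]; push_cast; ring
      rw [hs]
      have hre : (w * ((2*T : ℝ) : ℂ)).re = (2*T) * w.re := by
        simp [Complex.mul_re]; ring
      rw [hre]
      field_simp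
    exact Tendsto.congr' (hev.mono fun _ hx => hx.symm) tendsto_const_nhds
  · simp only [if_neg hν]
    apply squeeze_zero_norm' (a := fun T => (‖w‖ * (2/|ν|)) / (2*T))
    · filter_upwards [eventually_gt_atTop (0:ℝ)] with T hT
      have h1 : |(w * ∫ t in (-T)..T, Complex.exp ((ν:ℂ)*(t:ℂ)*Complex.I)).re|
          ≤ ‖w‖ * (2/|ν|) := by
        calc |(w * ∫ t in (-T)..T, Complex.exp ((ν:ℂ)*(t:ℂ)*Complex.I)).re|
            ≤ ‖w * ∫ t in (-T)..T, Complex.exp ((ν:ℂ)*(t:ℂ)*Complex.I)‖ :=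
              Complex.abs_re_le_norm _
          _ ≤ ‖w‖ * ‖∫ t in (-T)..T, Complex.exp ((ν:ℂ)*(t:ℂ)*Complex.I)‖ := norm_mul_le _ _
          _ ≤ ‖w‖ * (2/|ν|) := by gcongr; exact meanExpBound ν hν T
      have h2 : ‖(1/(2*T)) * (w * ∫ t in (-T)..T, Complex.exp ((ν:ℂ)*(t:ℂ)*Complex.I)).re‖
          = (1/(2*T)) * |(w * ∫ t in (-T)..T, Complex.exp ((ν:ℂ)*(t:ℂ)*Complex.I)).re| := by
        rw [Real.norm_eq_abs, abs_mul, abs_of_pos (by positivity : (0:ℝ) < 1/(2*T))]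
      rw [h2]
      have h3 : (1/(2*T)) * (‖w‖ * (2/|ν|)) = (‖w‖ * (2/|ν|)) / (2*T) := by ring
      rw [← h3]
      gcongr
    · exact Tendsto.div_atTop tendsto_const_nhds twoT_tendsto






lemma TP {ι : Type*} [Fintype ι] (cc : ι → ℂ) (m : ι → ℝ) :
    Tendsto (fun T : ℝ => (1/(2*T)) * ∫ t in (-T)..T,
        ‖∑ j, cc j * Complex.exp (-(↑(m j) * ↑t) * Complex.I)‖^2)
      atTop
      (nhds (∑ j, ∑ j', if m j' = m j then (cc j * (starRingEnd ℂ) (cc j')).re else 0)) := by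
  classical
  set g : ℝ → ℂ := fun t => ∑ j, cc j * Complex.exp (-(↑(m j) * ↑t) * Complex.I) with hg
  have key : ∀ t : ℝ, ‖g t‖^2
      = ∑ j, ∑ j', (cc j * (starRingEnd ℂ) (cc j')
          * Complex.exp ((↑(m j' - m j) : ℂ) * (t:ℂ) * Complex.I)).re := by
    intro t
    have h1 : (g t * (starRingEnd ℂ) (g t)).re = ‖g t‖^2 := by
      rw [Complex.mul_conj, Complex.ofReal_re, Complex.normSq_eq_norm_sq]
    rw [← h1, hg]
    rw [map_sum]
    rw [Finset.sum_mul_sum]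
    rw [Complex.re_sum]
    refine Finset.sum_congr rfl fun j _ => ?_
    rw [Complex.re_sum]
    refine Finset.sum_congr rfl fun j' _ => ?_
    congr 1
    rw [map_mul]
    have hce : (starRingEnd ℂ) (Complex.exp (-(↑(m j') * ↑t) * Complex.I))
        = Complex.exp ((↑(m j') * ↑t) * Complex.I) := by
      rw [← Complex.exp_conj]
      congr 1
      simp only [map_mul, map_neg, Complex.conj_I, Complex.conj_ofReal]
      ring
    rw [hce]
    rw [mul_mul_mul_comm, ← Complex.exp_add]
    congr 2
    push_cast
    ring
  simp only [hg] at key ⊢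
  simp only [key]
  have hint : ∀ (T : ℝ), (∫ t in (-T)..T, ∑ j, ∑ j', (cc j * (starRingEnd ℂ) (cc j')
        * Complex.exp ((↑(m j' - m j) : ℂ) * (t:ℂ) * Complex.I)).re)
      = ∑ j, ∑ j', (cc j * (starRingEnd ℂ) (cc j')
        * ∫ t in (-T)..T, Complex.exp ((↑(m j' - m j) : ℂ) * (t:ℂ) * Complex.I)).re := by
    intro T
    rw [intervalIntegral.integral_finset_sum]
    · refine Finset.sum_congr rfl fun j _ => ?_
      rw [intervalIntegral.integral_finset_sum]
      · refine Finset.sum_congr rfl fun j' _ => ?_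
        have hmeas : IntervalIntegrable
            (fun t : ℝ => cc j * (starRingEnd ℂ) (cc j')
              * Complex.exp ((↑(m j' - m j) : ℂ) * (t:ℂ) * Complex.I)) MeasureTheory.volume (-T) T := by
          apply Continuous.intervalIntegrable
          fun_prop
        have h5 := (Complex.reCLM).intervalIntegral_comp_comm hmeas
        simp only [Complex.reCLM_apply] at h5
        rw [h5, intervalIntegral.integral_const_mul]
      · intro j' _
        apply Continuous.intervalIntegrable
        fun_prop
    · intro j _
      apply Continuous.intervalIntegrable
      apply continuous_finset_sum
      intro j' _
      fun_prop
  simp only [hint]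
  have hmul : ∀ (T : ℝ), (1/(2*T)) * (∑ j, ∑ j', (cc j * (starRingEnd ℂ) (cc j')
        * ∫ t in (-T)..T, Complex.exp ((↑(m j' - m j) : ℂ) * (t:ℂ) * Complex.I)).re)
      = ∑ j, ∑ j', (1/(2*T)) * (cc j * (starRingEnd ℂ) (cc j')
        * ∫ t in (-T)..T, Complex.exp ((↑(m j' - m j) : ℂ) * (t:ℂ) * Complex.I)).re := by
    intro T
    rw [Finset.mul_sum]
    refine Finset.sum_congr rfl fun j _ => by rw [Finset.mul_sum]
  simp only [hmul]
  have : ∀ j j' : ι, (if m j' = m j then (cc j * (starRingEnd ℂ) (cc j')).re else 0)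
      = (if m j' - m j = 0 then (cc j * (starRingEnd ℂ) (cc j')).re else 0) := by
    intro j j'; simp [sub_eq_zero]
  simp only [this]
  apply tendsto_finset_sum
  intro j _
  apply tendsto_finset_sum
  intro j' _
  exact meanCross (cc j * (starRingEnd ℂ) (cc j')) (m j' - m j)



lemma bNorm_le_aux (p : ℝ) (hp2 : 2 ≤ p) (k : ℕ) (hpk : p ≤ 2*k) (f : ℝ → ℂ) (hf : Continuous f)
    (V : ℝ) (hV : Tendsto (fun T : ℝ => (1/(2*T)) * ∫ t in (-T)..T, ‖f t ^ k‖^2) atTop (nhds V)) :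
    0 ≤ 1 + V ∧
    (Filter.limsup (fun T : ℝ => (1 / (2 * T)) * ∫ t in (-T)..T, ‖f t‖ ^ p) Filter.atTop)
      ^ (1/p) ≤ (1 + V) ^ (1/p) := by
  have hp0 : (0:ℝ) < p := by linarith
  set u : ℝ → ℝ := fun T => (1 / (2 * T)) * ∫ t in (-T)..T, ‖f t‖ ^ p with hu
  set F : ℝ → ℝ := fun T => (1/(2*T)) * ∫ t in (-T)..T, ‖f t ^ k‖^2 with hF
  have hcontp : Continuous fun t : ℝ => ‖f t‖ ^ p :=
    (hf.norm).rpow_const (fun t => Or.inr (le_of_lt hp0))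
  have hcontk : Continuous fun t : ℝ => ‖f t ^ k‖^2 := by fun_prop
  have hptw : ∀ t : ℝ, ‖f t‖ ^ p ≤ 1 + ‖f t ^ k‖^2 := by
    intro t
    have hx : (0:ℝ) ≤ ‖f t‖ := norm_nonneg _
    rw [norm_pow, ← pow_mul]
    rcases le_total (‖f t‖) 1 with hle | hle
    · have : ‖f t‖ ^ p ≤ 1 := Real.rpow_le_one hx hle (le_of_lt hp0)
      have h2 : (0:ℝ) ≤ ‖f t‖ ^ (k*2) := pow_nonneg hx _
      linarith
    · have h1 : ‖f t‖ ^ p ≤ ‖f t‖ ^ ((k*2 : ℕ) : ℝ) := by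
        apply Real.rpow_le_rpow_of_exponent_le hle
        push_cast; linarith
      rw [Real.rpow_natCast] at h1
      linarith
  have hub : ∀ᶠ T in (atTop : Filter ℝ), u T ≤ 1 + F T := by
    filter_upwards [eventually_ge_atTop (1:ℝ)] with T hT
    have hTpos : (0:ℝ) < T := by linarith
    have h2T : (2*T) ≠ 0 := by positivity
    have hint1 : IntervalIntegrable (fun t : ℝ => ‖f t‖ ^ p) volume (-T) T :=
      hcontp.intervalIntegrable _ _
    have hint2 : IntervalIntegrable (fun t : ℝ => 1 + ‖f t ^ k‖^2) volume (-T) T :=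
      (continuous_const.add hcontk).intervalIntegrable _ _
    have hmono : (∫ t in (-T)..T, ‖f t‖ ^ p) ≤ ∫ t in (-T)..T, (1 + ‖f t ^ k‖^2) :=
      integral_mono_on (by linarith) hint1 hint2 (fun x _ => hptw x)
    have hsplit : (∫ t in (-T)..T, (1 + ‖f t ^ k‖^2))
        = (2*T) + ∫ t in (-T)..T, ‖f t ^ k‖^2 := by
      rw [integral_add (intervalIntegrable_const) (hcontk.intervalIntegrable _ _)]
      congr 1
      rw [intervalIntegral.integral_const]
      simp
      ring
    have : u T ≤ (1/(2*T)) * ((2*T) + ∫ t in (-T)..T, ‖f t ^ k‖^2) := by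
      rw [hu, ← hsplit]
      have : (0:ℝ) < 1/(2*T) := by positivity
      exact mul_le_mul_of_nonneg_left hmono (le_of_lt this)
    calc u T ≤ (1/(2*T)) * ((2*T) + ∫ t in (-T)..T, ‖f t ^ k‖^2) := this
      _ = 1 + F T := by rw [hF]; field_simp
  have h0 : ∀ᶠ T in (atTop : Filter ℝ), 0 ≤ u T := by
    filter_upwards [eventually_ge_atTop (1:ℝ)] with T hT
    have hTpos : (0:ℝ) < T := by linarith
    apply mul_nonneg (by positivity)
    apply intervalIntegral.integral_nonneg (by linarith)
    intro x _
    exact Real.rpow_nonneg (norm_nonneg _) _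
  have hV1 : Tendsto (fun T => 1 + F T) atTop (nhds (1 + V)) := tendsto_const_nhds.add hV
  have hbd : IsBoundedUnder (· ≤ ·) atTop u := hV1.isBoundedUnder_le.mono_le hub
  have hcob : IsCoboundedUnder (· ≤ ·) atTop u := by
    apply Filter.IsBoundedUnder.isCoboundedUnder_le
    exact ⟨0, by simpa using h0⟩
  have hls : limsup u atTop ≤ 1 + V := by
    have := Filter.limsup_le_limsup hub hcob hV1.isBoundedUnder_le
    rwa [hV1.limsup_eq] at this
  have h0' : 0 ≤ limsup u atTop :=
    Filter.le_limsup_of_frequently_le h0.frequently hbd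
  refine ⟨le_trans h0' hls, ?_⟩
  exact Real.rpow_le_rpow h0' hls (by positivity)



lemma ML {N k : ℕ} (c : Fin N → ℂ) (w : Fin N → ℝ) (t : ℝ) :
    (∑ n, c n * Complex.exp (-(↑(w n) * ↑t) * Complex.I)) ^ k
      = ∑ j : Fin k → Fin N, (∏ i, c (j i))
          * Complex.exp (-(↑(∑ i, w (j i)) * ↑t) * Complex.I) := by
  classical
  have h1 : (∑ n, c n * Complex.exp (-(↑(w n) * ↑t) * Complex.I)) ^ k
      = ∏ _i : Fin k, (∑ n, c n * Complex.exp (-(↑(w n) * ↑t) * Complex.I)) := by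
    rw [Finset.prod_const, Finset.card_univ, Fintype.card_fin]
  rw [h1, Finset.prod_univ_sum]
  rw [← Fintype.piFinset_univ]
  refine Finset.sum_congr rfl fun j _ => ?_
  rw [Finset.prod_mul_distrib]
  congr 1
  rw [← Complex.exp_sum]
  congr 1
  push_cast
  simp only [neg_mul, ← Finset.sum_neg_distrib, Finset.sum_mul]




lemma GS {M : ℕ} (hM : M ≠ 0) {c1 c2 : ℕ} (h1 : c1 < M) (h2 : c2 < M) :
    (∑ v : Fin M, ((Complex.exp (2 * Real.pi * Complex.I / M)) ^ (v : ℕ)) ^ c1 *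
      (starRingEnd ℂ) (((Complex.exp (2 * Real.pi * Complex.I / M)) ^ (v : ℕ)) ^ c2))
    = if c1 = c2 then (M : ℂ) else 0 := by
  set ζ : ℂ := Complex.exp (2 * Real.pi * Complex.I / M) with hζ
  have hprim : IsPrimitiveRoot ζ M := Complex.isPrimitiveRoot_exp M hM
  have hζM : ζ ^ M = 1 := hprim.pow_eq_one
  have hnorm : ∀ c : ℕ, ζ ^ c * (starRingEnd ℂ) (ζ ^ c) = 1 := by
    intro c
    rw [Complex.mul_conj]
    have habs : ‖ζ‖ = 1 := by
      rw [hζ]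
      have hrw : (2 * (Real.pi : ℂ) * Complex.I / M) = ((2 * Real.pi / M : ℝ) : ℂ) * Complex.I := by
        push_cast; ring
      rw [hrw, Complex.norm_exp_ofReal_mul_I]
    rw [Complex.normSq_eq_norm_sq, norm_pow, habs]
    simp
  set x : ℂ := ζ ^ c1 * (starRingEnd ℂ) (ζ ^ c2) with hx
  have hterm : ∀ v : Fin M, (ζ ^ (v : ℕ)) ^ c1 * (starRingEnd ℂ) ((ζ ^ (v : ℕ)) ^ c2)
      = x ^ (v : ℕ) := by
    intro v
    have hc : ∀ (z : ℂ) (a b : ℕ), (z^a)^b = (z^b)^a := fun z a b => by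
      rw [← pow_mul, Nat.mul_comm, pow_mul]
    rw [hx, mul_pow, ← map_pow, hc ζ (v:ℕ) c1, hc ζ (v:ℕ) c2]
  simp_rw [hterm]
  rw [Fin.sum_univ_eq_sum_range (fun v => x ^ v) M]
  by_cases hc : c1 = c2
  · subst hc
    rw [if_pos rfl]
    have hx1 : x = 1 := hnorm c1
    simp [hx1]
  · rw [if_neg hc]
    have hxne : x ≠ 1 := by
      intro hx1
      apply hc
      apply hprim.pow_inj h1 h2
      calc ζ^c1 = ζ^c1 * ((starRingEnd ℂ) (ζ^c2) * ζ^c2) := by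
            rw [mul_comm ((starRingEnd ℂ) (ζ ^ c2)), hnorm c2, mul_one]
        _ = x * ζ^c2 := by rw [hx]; ring
        _ = ζ^c2 := by rw [hx1, one_mul]
    rw [geom_sum_eq hxne]
    have hxM : x ^ M = 1 := by
      have hc : ∀ (z : ℂ) (a b : ℕ), (z^a)^b = (z^b)^a := fun z a b => by
        rw [← pow_mul, Nat.mul_comm, pow_mul]
      rw [hx, mul_pow, ← map_pow, hc ζ c1 M, hc ζ c2 M, hζM, one_pow, one_pow, map_one, one_mul]
    rw [hxM, sub_self, zero_div]




lemma existsPerm {N k : ℕ} (j j' : Fin k → Fin N)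
    (hcnt : ∀ n, #(univ.filter fun i => j i = n) = #(univ.filter fun i => j' i = n)) :
    ∃ π : Equiv.Perm (Fin k), j' = j ∘ π := by
  have e : ∀ n : Fin N, {i // j' i = n} ≃ {i // j i = n} := by
    intro n
    apply Fintype.equivOfCardEq
    rw [Fintype.card_subtype, Fintype.card_subtype]
    exact (hcnt n).symm
  refine ⟨Equiv.ofFiberEquiv e, ?_⟩
  funext i
  exact (Equiv.ofFiberEquiv_map e i).symm

lemma classCard {N k : ℕ} (j : Fin k → Fin N) :
    #(univ.filter fun j' : Fin k → Fin N =>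
        ∀ n, #(univ.filter fun i => j i = n) = #(univ.filter fun i => j' i = n))
      ≤ Nat.factorial k := by
  classical
  have := Finset.card_le_card_of_injOn
    (f := fun j' : Fin k → Fin N =>
      if h : ∃ π : Equiv.Perm (Fin k), j' = j ∘ π then h.choose else Equiv.refl _)
    (s := univ.filter fun j' : Fin k → Fin N =>
        ∀ n, #(univ.filter fun i => j i = n) = #(univ.filter fun i => j' i = n))
    (t := (univ : Finset (Equiv.Perm (Fin k))))
    (fun _ _ => mem_univ _) ?_
  · calc _ ≤ #(univ : Finset (Equiv.Perm (Fin k))) := this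
      _ = Nat.factorial k := by
        rw [Finset.card_univ, Fintype.card_perm, Fintype.card_fin]
  · intro x hx y hy hxy
    simp only [Finset.mem_coe, Finset.mem_filter] at hx hy
    have hex : ∃ π : Equiv.Perm (Fin k), x = j ∘ π := existsPerm j x hx.2
    have hey : ∃ π : Equiv.Perm (Fin k), y = j ∘ π := existsPerm j y hy.2
    simp only [dif_pos hex, dif_pos hey] at hxy
    rw [hex.choose_spec, hey.choose_spec, hxy]










lemma averaging {N k M : ℕ} (hM : M ≠ 0) (hkM : k < M) (a : Fin N → ℂ) (w : Fin N → ℝ) :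
    ∃ r : Fin N → Fin M,
      (∑ j : Fin k → Fin N, ∑ j' : Fin k → Fin N,
        if (∑ i, w (j' i)) = (∑ i, w (j i))
        then ((∏ i, Complex.exp (2 * Real.pi * Complex.I / M) ^ (r (j i) : ℕ) * a (j i)) *
          (starRingEnd ℂ)
            (∏ i, Complex.exp (2 * Real.pi * Complex.I / M) ^ (r (j' i) : ℕ) * a (j' i))).re
        else 0)
      ≤ Nat.factorial k * (∑ n, ‖a n‖ ^ 2) ^ k := by
  classical
  set ζ : ℂ := Complex.exp (2 * Real.pi * Complex.I / M) with hζ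
  set cnt : (Fin k → Fin N) → Fin N → ℕ := fun j n => #(univ.filter fun i => j i = n)
    with hcnt
  have hcntlt : ∀ (j : Fin k → Fin N) n, cnt j n < M := by
    intro j n
    calc cnt j n ≤ #(univ : Finset (Fin k)) := Finset.card_filter_le _ _
      _ = k := by rw [Finset.card_univ, Fintype.card_fin]
      _ < M := hkM
  set Q : ℝ := ∑ n, ‖a n‖ ^ 2 with hQ
  set V : (Fin N → Fin M) → ℝ := fun r =>
      ∑ j : Fin k → Fin N, ∑ j' : Fin k → Fin N,
        if (∑ i, w (j' i)) = (∑ i, w (j i))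
        then ((∏ i, ζ ^ (r (j i) : ℕ) * a (j i)) *
          (starRingEnd ℂ) (∏ i, ζ ^ (r (j' i) : ℕ) * a (j' i))).re
        else 0 with hV
  haveI : Nonempty (Fin M) := ⟨⟨0, Nat.pos_of_ne_zero hM⟩⟩
  have hQk : (∑ j : Fin k → Fin N, ∏ i, ‖a (j i)‖ ^ 2) = Q ^ k := by
    rw [hQ]
    have h1 : (∑ n, ‖a n‖ ^ 2) ^ k = ∏ _i : Fin k, (∑ n, ‖a n‖ ^ 2) := by
      rw [Finset.prod_const, Finset.card_univ, Fintype.card_fin]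
    rw [h1, Finset.prod_univ_sum, ← Fintype.piFinset_univ]
  -- key pointwise bound after summing over r
  have hmain : ∀ (j j' : Fin k → Fin N),
      (∑ r : Fin N → Fin M,
        (if (∑ i, w (j' i)) = (∑ i, w (j i))
        then ((∏ i, ζ ^ (r (j i) : ℕ) * a (j i)) *
          (starRingEnd ℂ) (∏ i, ζ ^ (r (j' i) : ℕ) * a (j' i))).re
        else 0))
      ≤ (if (∀ n, cnt j n = cnt j' n) then (M:ℝ)^N * ∏ i, ‖a (j i)‖ ^ 2 else 0) := by
    intro j j'
    -- factor each term
    have hsplit : ∀ r : Fin N → Fin M,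
        (∏ i, ζ ^ (r (j i) : ℕ) * a (j i)) *
          (starRingEnd ℂ) (∏ i, ζ ^ (r (j' i) : ℕ) * a (j' i))
        = ((∏ i, a (j i)) * (starRingEnd ℂ) (∏ i, a (j' i))) *
            ∏ n, ((ζ ^ ((r n : ℕ)))^(cnt j n) *
              (starRingEnd ℂ) ((ζ ^ ((r n : ℕ)))^(cnt j' n))) := by
      intro r
      have hfib : ∀ (jj : Fin k → Fin N),
          (∏ i, ζ ^ (r (jj i) : ℕ)) = ∏ n, (ζ ^ ((r n : ℕ)))^(cnt jj n) := by
        intro jj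
        rw [hcnt]
        have := Finset.prod_fiberwise' (univ : Finset (Fin k)) jj
          (fun n => ζ ^ ((r n : ℕ)))
        rw [← this]
        refine Finset.prod_congr rfl fun n _ => ?_
        rw [Finset.prod_const]
      have hcomb : (∏ n, (ζ ^ ((r n : ℕ)))^(cnt j n)) *
          (∏ n, (starRingEnd ℂ) ((ζ ^ ((r n : ℕ)))^(cnt j' n)))
          = ∏ n, ((ζ ^ ((r n : ℕ)))^(cnt j n) *
              (starRingEnd ℂ) ((ζ ^ ((r n : ℕ)))^(cnt j' n))) :=
        (Finset.prod_mul_distrib).symm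
      rw [Finset.prod_mul_distrib, Finset.prod_mul_distrib, map_mul, hfib j, hfib j',
        map_prod, ← hcomb]
      ring
    by_cases hall : ∀ n, cnt j n = cnt j' n
    · rw [if_pos hall]
      obtain ⟨π, hπ⟩ := existsPerm j j' hall
      have hprodeq : (∏ i, a (j' i)) = ∏ i, a (j i) := by
        rw [hπ]
        exact Equiv.prod_comp π (fun i => a (j i))
      by_cases hmu : (∑ i, w (j' i)) = (∑ i, w (j i))
      · simp only [if_pos hmu]
        have : (∑ r : Fin N → Fin M,
            ((∏ i, ζ ^ (r (j i) : ℕ) * a (j i)) *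
              (starRingEnd ℂ) (∏ i, ζ ^ (r (j' i) : ℕ) * a (j' i))).re)
            = (M:ℝ)^N * ∏ i, ‖a (j i)‖ ^ 2 := by
          rw [← Complex.re_sum]
          simp_rw [hsplit]
          rw [← Finset.mul_sum]
          have hZ : (∑ r : Fin N → Fin M,
              ∏ n, ((ζ ^ ((r n : ℕ)))^(cnt j n) *
                (starRingEnd ℂ) ((ζ ^ ((r n : ℕ)))^(cnt j' n)))) = (M:ℂ)^N := by
            rw [← Fintype.piFinset_univ, Finset.sum_prod_piFinset (univ : Finset (Fin M))
              (fun n (v : Fin M) => ((ζ ^ ((v : ℕ)))^(cnt j n) *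
                (starRingEnd ℂ) ((ζ ^ ((v : ℕ)))^(cnt j' n))))]
            have hinner : ∀ n : Fin N, (∑ v : Fin M, ((ζ ^ ((v : ℕ)))^(cnt j n) *
                (starRingEnd ℂ) ((ζ ^ ((v : ℕ)))^(cnt j' n)))) = (M:ℂ) := by
              intro n
              rw [hζ, GS hM (hcntlt j n) (hcntlt j' n), if_pos (hall n)]
            rw [Finset.prod_congr rfl (fun n _ => hinner n), Finset.prod_const,
              Finset.card_univ, Fintype.card_fin]
          rw [hZ, hprodeq, Complex.mul_conj]
          have hns : Complex.normSq (∏ i, a (j i)) = ∏ i, ‖a (j i)‖ ^ 2 := by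
            rw [Complex.normSq_eq_norm_sq, norm_prod, ← Finset.prod_pow]
          rw [hns]
          have : ((∏ i, ‖a (j i)‖ ^ 2 : ℝ) : ℂ) * (M:ℂ)^N
              = (((M:ℝ)^N * ∏ i, ‖a (j i)‖ ^ 2 : ℝ) : ℂ) := by
            push_cast; ring
          rw [this, Complex.ofReal_re]
        rw [this]
      · simp only [if_neg hmu]
        rw [Finset.sum_const, smul_zero]
        positivity
    · rw [if_neg hall]
      push_neg at hall
      obtain ⟨n0, hn0⟩ := hall
      have hterm : ∀ r : Fin N → Fin M,
          (if (∑ i, w (j' i)) = (∑ i, w (j i))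
          then ((∏ i, ζ ^ (r (j i) : ℕ) * a (j i)) *
            (starRingEnd ℂ) (∏ i, ζ ^ (r (j' i) : ℕ) * a (j' i))).re
          else 0) = if (∑ i, w (j' i)) = (∑ i, w (j i))
            then ((((∏ i, a (j i)) * (starRingEnd ℂ) (∏ i, a (j' i))) : ℂ) *
              ∏ n, ((ζ ^ ((r n : ℕ)))^(cnt j n) *
                (starRingEnd ℂ) ((ζ ^ ((r n : ℕ)))^(cnt j' n)))).re
            else 0 := by
        intro r; rw [hsplit r]
      simp_rw [hterm]
      by_cases hmu : (∑ i, w (j' i)) = (∑ i, w (j i))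
      · simp only [if_pos hmu]
        rw [← Complex.re_sum, ← Finset.mul_sum]
        have hZ : (∑ r : Fin N → Fin M,
            ∏ n, ((ζ ^ ((r n : ℕ)))^(cnt j n) *
              (starRingEnd ℂ) ((ζ ^ ((r n : ℕ)))^(cnt j' n)))) = 0 := by
          rw [← Fintype.piFinset_univ, Finset.sum_prod_piFinset (univ : Finset (Fin M))
            (fun n (v : Fin M) => ((ζ ^ ((v : ℕ)))^(cnt j n) *
              (starRingEnd ℂ) ((ζ ^ ((v : ℕ)))^(cnt j' n))))]
          apply Finset.prod_eq_zero (Finset.mem_univ n0)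
          rw [hζ, GS hM (hcntlt j n0) (hcntlt j' n0), if_neg hn0]
        rw [hZ, mul_zero, Complex.zero_re]
      · simp only [if_neg hmu]
        rw [Finset.sum_const, smul_zero]
  -- assemble
  have hNE : (univ : Finset (Fin N → Fin M)).Nonempty := Finset.univ_nonempty
  have hsum : (∑ r : Fin N → Fin M, V r) ≤ ∑ _r : Fin N → Fin M, (Nat.factorial k * Q ^ k) := by
    rw [hV]
    rw [Finset.sum_comm]
    calc (∑ j : Fin k → Fin N, ∑ r : Fin N → Fin M, ∑ j' : Fin k → Fin N,
        (if (∑ i, w (j' i)) = (∑ i, w (j i))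
        then ((∏ i, ζ ^ (r (j i) : ℕ) * a (j i)) *
          (starRingEnd ℂ) (∏ i, ζ ^ (r (j' i) : ℕ) * a (j' i))).re
        else 0))
        = ∑ j : Fin k → Fin N, ∑ j' : Fin k → Fin N, ∑ r : Fin N → Fin M,
        (if (∑ i, w (j' i)) = (∑ i, w (j i))
        then ((∏ i, ζ ^ (r (j i) : ℕ) * a (j i)) *
          (starRingEnd ℂ) (∏ i, ζ ^ (r (j' i) : ℕ) * a (j' i))).re
        else 0) := Finset.sum_congr rfl fun j _ => Finset.sum_comm
      _ ≤ ∑ j : Fin k → Fin N, ∑ j' : Fin k → Fin N,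
          (if (∀ n, cnt j n = cnt j' n) then (M:ℝ)^N * ∏ i, ‖a (j i)‖ ^ 2 else 0) := by
          apply Finset.sum_le_sum
          intro j _
          apply Finset.sum_le_sum
          intro j' _
          exact hmain j j'
      _ ≤ ∑ _r : Fin N → Fin M, (Nat.factorial k * Q ^ k) := by
          have hje : ∀ j : Fin k → Fin N,
              (∑ j' : Fin k → Fin N,
                (if (∀ n, cnt j n = cnt j' n) then (M:ℝ)^N * ∏ i, ‖a (j i)‖ ^ 2 else 0))
              ≤ (M:ℝ)^N * (Nat.factorial k * ∏ i, ‖a (j i)‖ ^ 2) := by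
            intro j
            rw [← Finset.sum_filter]
            rw [Finset.sum_const]
            rw [nsmul_eq_mul]
            have hcard : (#(univ.filter fun j' : Fin k → Fin N => ∀ n, cnt j n = cnt j' n) : ℝ)
                ≤ (Nat.factorial k : ℝ) := by
              exact_mod_cast classCard j
            have hnn : (0:ℝ) ≤ (M:ℝ)^N * ∏ i, ‖a (j i)‖ ^ 2 := by positivity
            calc (#(univ.filter fun j' : Fin k → Fin N => ∀ n, cnt j n = cnt j' n) : ℝ) *
                ((M:ℝ)^N * ∏ i, ‖a (j i)‖ ^ 2)
                ≤ (Nat.factorial k : ℝ) * ((M:ℝ)^N * ∏ i, ‖a (j i)‖ ^ 2) :=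
                  mul_le_mul_of_nonneg_right hcard hnn
              _ = (M:ℝ)^N * (Nat.factorial k * ∏ i, ‖a (j i)‖ ^ 2) := by ring
          calc (∑ j : Fin k → Fin N, ∑ j' : Fin k → Fin N,
              (if (∀ n, cnt j n = cnt j' n) then (M:ℝ)^N * ∏ i, ‖a (j i)‖ ^ 2 else 0))
              ≤ ∑ j : Fin k → Fin N, (M:ℝ)^N * (Nat.factorial k * ∏ i, ‖a (j i)‖ ^ 2) :=
                Finset.sum_le_sum fun j _ => hje j
            _ = (M:ℝ)^N * (Nat.factorial k * Q ^ k) := by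
                rw [← Finset.mul_sum, ← Finset.mul_sum, hQk]
            _ = ∑ _r : Fin N → Fin M, (Nat.factorial k * Q ^ k) := by
                rw [Finset.sum_const, nsmul_eq_mul, Finset.card_univ]
                have hcardp : (Fintype.card (Fin N → Fin M) : ℝ) = (M:ℝ)^N := by
                  rw [Fintype.card_fun, Fintype.card_fin, Fintype.card_fin]
                  push_cast
                  ring
                rw [hcardp]
  obtain ⟨r, _, hr⟩ := Finset.exists_le_of_sum_le hNE hsum
  exact ⟨r, hr⟩


/-- The Besicovitch `r`-norm of a function on the real line. -/
noncomputable def bNorm (r : ℝ) (f : ℝ → ℂ) : ℝ :=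
  (Filter.limsup (fun T : ℝ => (1 / (2 * T)) * ∫ t in (-T)..T, ‖f t‖ ^ r)
    Filter.atTop) ^ (1 / r)

set_option maxHeartbeats 2000000 in
/-- Randomization lower bound for `S_p` when `p ≥ 2`: if
`Σ|a_n|e^{-λ_nσ} ≤ C‖D‖_p` for all Dirichlet polynomials, then there is a
Kahane–Khinchin constant `C_p` with `Σ_{n<N}|a_n|e^{-λ_nσ} ≤ C·C_p (Σ_{n<N}|a_n|²)^{1/2}`. -/
theorem randomization_lower_bound (lam : ℕ → ℝ) (h1 : StrictMono lam) (h2 : ∀ n, 0 ≤ lam n)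
    (h3 : Tendsto lam atTop atTop) (p : ℝ) (hp : 2 ≤ p) (σ : ℝ) (hσ : 0 < σ)
    (C : ℝ) (hC : 0 < C)
    (h : ∀ (N : ℕ) (a : ℕ → ℂ),
      ∑ n ∈ Finset.range N, ‖a n‖ * Real.exp (-(lam n) * σ) ≤
        C * bNorm p (fun t =>
          ∑ n ∈ Finset.range N, a n * Complex.exp (-(lam n * t) * Complex.I))) :
    ∃ Cp > (0 : ℝ), ∀ (N : ℕ) (a : ℕ → ℂ),
      ∑ n ∈ Finset.range N, ‖a n‖ * Real.exp (-(lam n) * σ) ≤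
        C * Cp * (∑ n ∈ Finset.range N, ‖a n‖ ^ 2) ^ (1 / 2 : ℝ) := by
  classical
  have hp0 : (0:ℝ) < p := by linarith
  set k : ℕ := Nat.ceil (p/2) with hkdef
  have hpk : p ≤ 2 * (k:ℝ) := by
    have := Nat.le_ceil (p/2)
    rw [← hkdef] at this
    linarith
  set M : ℕ := k + 1 with hMdef
  have hMne : M ≠ 0 := Nat.succ_ne_zero k
  have hkM : k < M := Nat.lt_succ_self k
  set ζ : ℂ := Complex.exp (2 * Real.pi * Complex.I / M) with hζ
  have hζnorm : ‖ζ‖ = 1 := by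
    rw [hζ]
    have hrw : (2 * (Real.pi:ℂ) * Complex.I / M) = ((2 * Real.pi / M : ℝ) : ℂ) * Complex.I := by
      push_cast; ring
    rw [hrw, Complex.norm_exp_ofReal_mul_I]
  set Cp : ℝ := (1 + (Nat.factorial k : ℝ)) ^ (1/p) with hCpdef
  have hCppos : 0 < Cp := Real.rpow_pos_of_pos (by positivity) _
  have core : ∀ (N : ℕ) (a : ℕ → ℂ), (∑ n ∈ Finset.range N, ‖a n‖ ^ 2) = 1 →
      ∑ n ∈ Finset.range N, ‖a n‖ * Real.exp (-(lam n) * σ) ≤ C * Cp := by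
    intro N a hQ1
    obtain ⟨r, hr⟩ := averaging (N := N) (k := k) (M := M) hMne hkM
      (fun i : Fin N => a (i : ℕ)) (fun i : Fin N => lam (i : ℕ))
    set b : ℕ → ℂ := fun n => if hn : n < N then ζ ^ (r ⟨n, hn⟩ : ℕ) * a n else 0 with hbdef
    have hbn : ∀ n ∈ Finset.range N, ‖b n‖ = ‖a n‖ := by
      intro n hn
      rw [Finset.mem_range] at hn
      simp only [hbdef]
      rw [dif_pos hn, norm_mul, norm_pow, hζnorm, one_pow, one_mul]
    set f : ℝ → ℂ := fun t => ∑ n ∈ Finset.range N, b n * Complex.exp (-(lam n * t) * Complex.I)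
      with hfdef
    have hfc : Continuous f := by
      rw [hfdef]
      apply continuous_finset_sum
      intro n _
      fun_prop
    have hfFin : ∀ t : ℝ, f t = ∑ i : Fin N,
        (ζ ^ (r i : ℕ) * a (i : ℕ)) *
          Complex.exp (-((lam (i:ℕ) : ℂ) * (t:ℂ)) * Complex.I) := by
      intro t
      simp only [hfdef]
      rw [← Fin.sum_univ_eq_sum_range
        (fun n => b n * Complex.exp (-((lam n : ℂ) * (t:ℂ)) * Complex.I)) N]
      refine Finset.sum_congr rfl fun i _ => ?_
      congr 1
      simp only [hbdef]
      rw [dif_pos i.isLt]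
    set VV : ℝ := ∑ j : Fin k → Fin N, ∑ j' : Fin k → Fin N,
        if (∑ i, lam ((j' i : Fin N) : ℕ)) = (∑ i, lam ((j i : Fin N) : ℕ))
        then ((∏ i, ζ ^ (r (j i) : ℕ) * a ((j i : Fin N) : ℕ)) *
          (starRingEnd ℂ) (∏ i, ζ ^ (r (j' i) : ℕ) * a ((j' i : Fin N) : ℕ))).re
        else 0 with hVVdef
    have hrVV : VV ≤ (Nat.factorial k : ℝ) * (∑ i : Fin N, ‖a (i:ℕ)‖ ^ 2) ^ k := hr
    have hptk : ∀ t : ℝ, ‖∑ j : Fin k → Fin N,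
        (∏ i, ζ ^ (r (j i) : ℕ) * a ((j i : Fin N) : ℕ)) *
          Complex.exp (-((↑(∑ i, lam ((j i : Fin N) : ℕ)) : ℂ) * (t:ℂ)) * Complex.I)‖^2
        = ‖f t ^ k‖^2 := by
      intro t
      congr 1
      rw [hfFin t]
      rw [ML (fun i : Fin N => ζ ^ (r i : ℕ) * a (i : ℕ)) (fun i : Fin N => lam (i : ℕ)) t]
    have hTP := TP (ι := Fin k → Fin N)
      (fun j => ∏ i, ζ ^ (r (j i) : ℕ) * a ((j i : Fin N) : ℕ))
      (fun j => ∑ i, lam ((j i : Fin N) : ℕ))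
    have hVt : Tendsto (fun T : ℝ => (1/(2*T)) * ∫ t in (-T)..T, ‖f t ^ k‖^2) atTop
        (nhds VV) := by
      have hfun : (fun T : ℝ => (1/(2*T)) * ∫ t in (-T)..T, ‖∑ j : Fin k → Fin N,
          (∏ i, ζ ^ (r (j i) : ℕ) * a ((j i : Fin N) : ℕ)) *
            Complex.exp (-((↑(∑ i, lam ((j i : Fin N) : ℕ)) : ℂ) * (t:ℂ)) * Complex.I)‖^2)
          = (fun T : ℝ => (1/(2*T)) * ∫ t in (-T)..T, ‖f t ^ k‖^2) := by
        funext T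
        congr 1
        apply intervalIntegral.integral_congr
        intro t _
        exact hptk t
      rw [← hfun]
      exact hTP
    have haux := bNorm_le_aux p hp k hpk f hfc VV hVt
    have hb2 : bNorm p f ≤ (1 + VV) ^ (1/p) := by
      unfold bNorm
      exact haux.2
    have hVle : 1 + VV ≤ 1 + (Nat.factorial k : ℝ) := by
      have hQF : (∑ i : Fin N, ‖a (i:ℕ)‖ ^ 2) = 1 := by
        rw [Fin.sum_univ_eq_sum_range (fun n => ‖a n‖ ^ 2) N]
        exact hQ1
      rw [hQF, one_pow, mul_one] at hrVV
      linarith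
    calc ∑ n ∈ Finset.range N, ‖a n‖ * Real.exp (-(lam n) * σ)
        = ∑ n ∈ Finset.range N, ‖b n‖ * Real.exp (-(lam n) * σ) :=
          (Finset.sum_congr rfl fun n hn => by rw [hbn n hn]).symm
      _ ≤ C * bNorm p f := h N b
      _ ≤ C * ((1 + VV) ^ (1/p)) := mul_le_mul_of_nonneg_left hb2 hC.le
      _ ≤ C * Cp := by
          apply mul_le_mul_of_nonneg_left _ hC.le
          rw [hCpdef]
          exact Real.rpow_le_rpow haux.1 hVle (by positivity)
  refine ⟨Cp, hCppos, ?_⟩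
  intro N a
  set Q2 : ℝ := ∑ n ∈ Finset.range N, ‖a n‖ ^ 2 with hQ2def
  have hQ2nn : 0 ≤ Q2 := Finset.sum_nonneg fun n _ => sq_nonneg _
  rcases eq_or_lt_of_le hQ2nn with hQ0 | hQpos
  · have hz : ∀ n ∈ Finset.range N, ‖a n‖ ^ 2 = 0 := by
      rw [hQ2def] at hQ0
      exact (Finset.sum_eq_zero_iff_of_nonneg fun n _ => sq_nonneg _).1 hQ0.symm
    have hLHS : ∑ n ∈ Finset.range N, ‖a n‖ * Real.exp (-(lam n) * σ) = 0 := by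
      apply Finset.sum_eq_zero
      intro n hn
      have : ‖a n‖ = 0 := by
        have := hz n hn
        nlinarith [norm_nonneg (a n)]
      rw [this, zero_mul]
    rw [hLHS, ← hQ0, Real.zero_rpow (by norm_num : (1/2 : ℝ) ≠ 0), mul_zero]
  · set t : ℝ := Real.sqrt Q2 with htdef
    have htpos : 0 < t := Real.sqrt_pos.2 hQpos
    have ht2 : t ^ 2 = Q2 := Real.sq_sqrt hQ2nn
    set a' : ℕ → ℂ := fun n => ((t⁻¹ : ℝ) : ℂ) * a n with ha'def
    have hnorm' : ∀ n, ‖a' n‖ = t⁻¹ * ‖a n‖ := by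
      intro n
      simp only [ha'def]
      rw [norm_mul, Complex.norm_real, Real.norm_eq_abs, abs_of_pos (by positivity)]
    have hQ1' : (∑ n ∈ Finset.range N, ‖a' n‖ ^ 2) = 1 := by
      have : ∀ n ∈ Finset.range N, ‖a' n‖ ^ 2 = t⁻¹ ^ 2 * ‖a n‖ ^ 2 := by
        intro n _
        rw [hnorm' n, mul_pow]
      rw [Finset.sum_congr rfl this, ← Finset.mul_sum, ← hQ2def, ← ht2]
      field_simp
    have hcore := core N a' hQ1'
    have hsum' : ∑ n ∈ Finset.range N, ‖a' n‖ * Real.exp (-(lam n) * σ)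
        = t⁻¹ * ∑ n ∈ Finset.range N, ‖a n‖ * Real.exp (-(lam n) * σ) := by
      rw [Finset.mul_sum]
      refine Finset.sum_congr rfl fun n _ => ?_
      rw [hnorm' n]
      ring
    rw [hsum'] at hcore
    have hfin : ∑ n ∈ Finset.range N, ‖a n‖ * Real.exp (-(lam n) * σ) ≤ C * Cp * t := by
      have := mul_le_mul_of_nonneg_left hcore htpos.le
      rw [← mul_assoc, mul_inv_cancel₀ htpos.ne', one_mul] at this
      linarith [this]
    have htq : t = Q2 ^ (1/2 : ℝ) := by
      rw [htdef, Real.sqrt_eq_rpow]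
    rw [htq] at hfin
    exact hfin
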